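/- For even m ≥ 2, the number of primitive elements of length m in the free group F_2 is greater than (4/3)·(√3)^m. -/

import Mathlib

def IsPrimitive (u : FreeGroup (Fin 2)) : Prop :=
  ∃ φ : FreeGroup (Fin 2) ≃* FreeGroup (Fin 2), φ (FreeGroup.of 0) = u

namespace PrimCountAux

open FreeGroup List

abbrev Ltr := Fin 2 × Bool

def Compat (a b : Ltr) : Prop := ¬(a.1 = b.1 ∧ a.2 = !b.2)

lemma fin2_succ_ne (a : Fin 2) : a + 1 ≠ a := by revert a; decide

lemma reduce_eq_self : ∀ {l : List Ltr}, l.Chain' Compat → FreeGroup.reduce l = l := by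
  intro l
  induction l with
  | nil => intro _; rfl
  | cons x tl ih =>
    intro h
    rw [FreeGroup.reduce.cons, ih h.tail]
    cases tl with
    | nil => rfl
    | cons y tl' =>
      have hxy : Compat x y := (List.isChain_cons_cons.mp h).1
      exact if_neg hxy

def pick (i : Fin 3) (q : Ltr) : Ltr :=
  match i with
  | 0 => q
  | 1 => (q.1 + 1, false)
  | 2 => (q.1 + 1, true)

lemma pick_compat (i : Fin 3) (q : Ltr) : Compat (pick i q) q := by
  fin_cases i <;> simp [pick, Compat, fin2_succ_ne]

lemma pick_injective (q : Ltr) : Function.Injective (pick · q) := by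
  intro i j h
  fin_cases i <;> fin_cases j <;>
    simp_all [pick, Prod.ext_iff, fin2_succ_ne, (fin2_succ_ne q.1).symm]

def wordFrom : List (Fin 3) → Ltr → List Ltr
  | [], c => [c]
  | i :: t, c => pick i ((wordFrom t c).headI) :: wordFrom t c

lemma wordFrom_exists_cons (l : List (Fin 3)) (c : Ltr) :
    ∃ q w, wordFrom l c = q :: w := by
  cases l with
  | nil => exact ⟨c, [], rfl⟩
  | cons i t => exact ⟨_, _, rfl⟩

lemma wordFrom_length (l : List (Fin 3)) (c : Ltr) :
    (wordFrom l c).length = l.length + 1 := by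
  induction l with
  | nil => rfl
  | cons i t ih => simp [wordFrom, ih]

lemma wordFrom_chain' (l : List (Fin 3)) (c : Ltr) :
    (wordFrom l c).Chain' Compat := by
  induction l with
  | nil => simp [wordFrom, List.Chain']
  | cons i t ih =>
    obtain ⟨q, w, hw⟩ := wordFrom_exists_cons t c
    rw [wordFrom, hw]
    simp only [List.headI_cons]
    exact List.isChain_cons_cons.mpr ⟨pick_compat i q, hw ▸ ih⟩

lemma wordFrom_getLast? (l : List (Fin 3)) (c : Ltr) :
    (wordFrom l c).getLast? = some c := by
  induction l with
  | nil => rfl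
  | cons i t ih =>
    obtain ⟨q, w, hw⟩ := wordFrom_exists_cons t c
    rw [wordFrom, hw, List.getLast?_cons_cons, ← hw]
    exact ih

lemma wordFrom_inj : ∀ {l l' : List (Fin 3)} {c c' : Ltr},
    l.length = l'.length → wordFrom l c = wordFrom l' c' → l = l' ∧ c = c' := by
  intro l
  induction l with
  | nil =>
    intro l' c c' hlen h
    cases l' with
    | nil => simpa [wordFrom] using h
    | cons i t => simp at hlen
  | cons i t ih =>
    intro l' c c' hlen h
    cases l' with
    | nil => simp at hlen
    | cons i' t' =>
      simp only [wordFrom] at h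
      have htl : wordFrom t c = wordFrom t' c' := (List.cons.injEq _ _ _ _ ▸ h).2
      have hlen' : t.length = t'.length := by simpa using hlen
      obtain ⟨ht, hc⟩ := ih hlen' htl
      have hhd : pick i ((wordFrom t c).headI) = pick i' ((wordFrom t' c').headI) :=
        (List.cons.injEq _ _ _ _ ▸ h).1
      rw [← htl] at hhd
      have : i = i' := pick_injective _ hhd
      exact ⟨by rw [this, ht], hc⟩

lemma compat_linv {a b : Ltr} (h : Compat a b) : Compat (b.1, !b.2) (a.1, !a.2) := by
  simp only [Compat, not_and] at *
  intro h1 h2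
  simp at h2
  exact h (h1.symm) (by simp [h2])

lemma chain'_invRev {l : List Ltr} (h : l.Chain' Compat) :
    (FreeGroup.invRev l).Chain' Compat := by
  unfold FreeGroup.invRev
  rw [List.Chain', List.isChain_reverse, List.isChain_map]
  exact h.imp fun {a b} hab => compat_linv hab

def gv (t : Fin 2) (s : Bool) : FreeGroup (Fin 2) :=
  cond s (FreeGroup.of t) (FreeGroup.of t)⁻¹

lemma mk_single (t : Fin 2) (s : Bool) : FreeGroup.mk [(t, s)] = gv t s := by
  cases s
  · show _ = (FreeGroup.of t)⁻¹
    rw [show FreeGroup.of t = FreeGroup.mk [(t, true)] from rfl, FreeGroup.inv_mk]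
    rfl
  · rfl

lemma mk_pair (t : Fin 2) (s1 s2 : Bool) :
    FreeGroup.mk [(t, s1), (t + 1, s2)] = gv t s1 * gv (t + 1) s2 := by
  rw [← mk_single, ← mk_single, FreeGroup.mul_mk]
  rfl

/-- automorphism x ↦ xy, y ↦ y -/
def autB : FreeGroup (Fin 2) ≃* FreeGroup (Fin 2) :=
  MonoidHom.toMulEquiv
    (FreeGroup.lift ![FreeGroup.of 0 * FreeGroup.of 1, FreeGroup.of 1])
    (FreeGroup.lift ![FreeGroup.of 0 * (FreeGroup.of 1)⁻¹, FreeGroup.of 1])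
    (FreeGroup.ext_hom _ _ (by intro a; fin_cases a <;> simp [FreeGroup.lift_apply_of]))
    (FreeGroup.ext_hom _ _ (by intro a; fin_cases a <;> simp [FreeGroup.lift_apply_of]))

/-- automorphism x ↦ x⁻¹, y ↦ y -/
def autIX : FreeGroup (Fin 2) ≃* FreeGroup (Fin 2) :=
  MonoidHom.toMulEquiv
    (FreeGroup.lift ![(FreeGroup.of 0)⁻¹, FreeGroup.of 1])
    (FreeGroup.lift ![(FreeGroup.of 0)⁻¹, FreeGroup.of 1])
    (FreeGroup.ext_hom _ _ (by intro a; fin_cases a <;> simp [FreeGroup.lift_apply_of]))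
    (FreeGroup.ext_hom _ _ (by intro a; fin_cases a <;> simp [FreeGroup.lift_apply_of]))

/-- automorphism x ↦ x, y ↦ y⁻¹ -/
def autIY : FreeGroup (Fin 2) ≃* FreeGroup (Fin 2) :=
  MonoidHom.toMulEquiv
    (FreeGroup.lift ![FreeGroup.of 0, (FreeGroup.of 1)⁻¹])
    (FreeGroup.lift ![FreeGroup.of 0, (FreeGroup.of 1)⁻¹])
    (FreeGroup.ext_hom _ _ (by intro a; fin_cases a <;> simp [FreeGroup.lift_apply_of]))
    (FreeGroup.ext_hom _ _ (by intro a; fin_cases a <;> simp [FreeGroup.lift_apply_of]))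

/-- automorphism x ↦ y, y ↦ x -/
def autSw : FreeGroup (Fin 2) ≃* FreeGroup (Fin 2) :=
  MonoidHom.toMulEquiv
    (FreeGroup.lift ![FreeGroup.of 1, FreeGroup.of 0])
    (FreeGroup.lift ![FreeGroup.of 1, FreeGroup.of 0])
    (FreeGroup.ext_hom _ _ (by intro a; fin_cases a <;> simp [FreeGroup.lift_apply_of]))
    (FreeGroup.ext_hom _ _ (by intro a; fin_cases a <;> simp [FreeGroup.lift_apply_of]))

lemma isPrimitive_apply (ψ : FreeGroup (Fin 2) ≃* FreeGroup (Fin 2))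
    {u : FreeGroup (Fin 2)} (h : IsPrimitive u) : IsPrimitive (ψ u) := by
  obtain ⟨φ, hφ⟩ := h
  exact ⟨φ.trans ψ, by simp [hφ]⟩

lemma isPrimitive_conj (w : FreeGroup (Fin 2)) {u : FreeGroup (Fin 2)}
    (h : IsPrimitive u) : IsPrimitive (w * u * w⁻¹) := by
  have := isPrimitive_apply (MulAut.conj w) h
  simpa using this

lemma isPrimitive_pair (t : Fin 2) (s1 s2 : Bool) :
    IsPrimitive (gv t s1 * gv (t + 1) s2) := by
  have h0 : IsPrimitive (FreeGroup.of 0 * FreeGroup.of 1) :=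
    ⟨autB, by simp [autB, FreeGroup.lift_apply_of]⟩
  have h1 : IsPrimitive (gv 0 s1 * gv 1 s2) := by
    have h2 := isPrimitive_apply (cond s1 (MulEquiv.refl _) autIX) h0
    have h3 := isPrimitive_apply (cond s2 (MulEquiv.refl _) autIY) h2
    revert h3
    cases s1 <;> cases s2 <;>
      simp [gv, autIX, autIY, FreeGroup.lift_apply_of] <;> exact id
  fin_cases t
  · simpa using h1
  · have h4 := isPrimitive_apply autSw h1
    revert h4
    cases s1 <;> cases s2 <;>
      simp [gv, autSw, FreeGroup.lift_apply_of] <;> exact id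

lemma finite_S (m : ℕ) :
    {u : FreeGroup (Fin 2) | IsPrimitive u ∧ u.toWord.length = m}.Finite := by
  have h1 : {u : FreeGroup (Fin 2) | IsPrimitive u ∧ u.toWord.length = m} ⊆
      FreeGroup.toWord ⁻¹' {l : List Ltr | l.length = m} := fun u hu => hu.2
  exact (Set.Finite.preimage FreeGroup.toWord_injective.injOn
    (List.finite_length_eq Ltr m)).subset h1


def cLtr (t : Fin 2) (s1 s2 : Bool) (e : Bool) : Ltr := cond e (t, s1) (t + 1, !s2)

lemma cLtr_inj_e {t : Fin 2} {s1 s2 : Bool} {e e' : Bool}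
    (h : cLtr t s1 s2 e = cLtr t s1 s2 e') : e = e' := by
  cases e <;> cases e' <;> simp_all [cLtr, Prod.ext_iff] <;>
    exact absurd h.1 (fin2_succ_ne t).symm <;> rfl

lemma compat_c_g1 (t : Fin 2) (s1 s2 e : Bool) : Compat (cLtr t s1 s2 e) (t, s1) := by
  cases e <;> simp [cLtr, Compat, fin2_succ_ne]

lemma compat_g2_invc (t : Fin 2) (s1 s2 e : Bool) :
    Compat (t + 1, s2) ((cLtr t s1 s2 e).1, !(cLtr t s1 s2 e).2) := by
  cases e <;> simp [cLtr, Compat, (fin2_succ_ne t).symm]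

def bigWord (t : Fin 2) (s1 s2 e : Bool) (v : List (Fin 3)) : List Ltr :=
  wordFrom v (cLtr t s1 s2 e) ++
    (t, s1) :: (t + 1, s2) :: FreeGroup.invRev (wordFrom v (cLtr t s1 s2 e))

lemma invRev_head? {l : List Ltr} {c : Ltr} (h : l.getLast? = some c) :
    (FreeGroup.invRev l).head? = some (c.1, !c.2) := by
  unfold FreeGroup.invRev
  rw [List.head?_reverse, List.getLast?_map, h]
  rfl

lemma bigWord_chain' (t : Fin 2) (s1 s2 e : Bool) (v : List (Fin 3)) :
    (bigWord t s1 s2 e v).Chain' Compat := by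
  set c := cLtr t s1 s2 e with hc
  set w := wordFrom v c with hwdef
  have hch : w.Chain' Compat := wordFrom_chain' v c
  have hlast : w.getLast? = some c := wordFrom_getLast? v c
  rw [bigWord, List.Chain', List.isChain_append]
  refine ⟨hch, ?_, ?_⟩
  · refine List.isChain_cons_cons.mpr ⟨?_, List.isChain_cons.mpr ⟨?_, chain'_invRev hch⟩⟩
    · simp [Compat, (fin2_succ_ne t).symm]
    · intro y hy
      rw [invRev_head? hlast] at hy
      obtain rfl : y = (c.1, !c.2) := by simpa using hy.symm
      exact compat_g2_invc t s1 s2 e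
  · intro x hx y hy
    obtain rfl : x = c := by rw [hlast] at hx; simpa using hx.symm
    obtain rfl : y = (t, s1) := by simpa using hy.symm
    exact compat_c_g1 t s1 s2 e

lemma bigWord_toWord (t : Fin 2) (s1 s2 e : Bool) (v : List (Fin 3)) :
    (FreeGroup.mk (bigWord t s1 s2 e v)).toWord = bigWord t s1 s2 e v := by
  rw [FreeGroup.toWord_mk, reduce_eq_self (bigWord_chain' t s1 s2 e v)]

lemma bigWord_length (t : Fin 2) (s1 s2 e : Bool) (v : List (Fin 3)) :
    (bigWord t s1 s2 e v).length = 2 * v.length + 4 := by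
  simp [bigWord, FreeGroup.invRev_length, wordFrom_length]
  omega

lemma bigWord_prim (t : Fin 2) (s1 s2 e : Bool) (v : List (Fin 3)) :
    IsPrimitive (FreeGroup.mk (bigWord t s1 s2 e v)) := by
  have heq : FreeGroup.mk (bigWord t s1 s2 e v) =
      FreeGroup.mk (wordFrom v (cLtr t s1 s2 e)) *
        FreeGroup.mk [(t, s1), (t + 1, s2)] *
        (FreeGroup.mk (wordFrom v (cLtr t s1 s2 e)))⁻¹ := by
    rw [FreeGroup.inv_mk, FreeGroup.mul_mk, FreeGroup.mul_mk, bigWord]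
    simp
  rw [heq]
  exact isPrimitive_conj _ (mk_pair t s1 s2 ▸ isPrimitive_pair t s1 s2)

lemma card_le_ncard {D : Type*} [Fintype D] {S : Set (FreeGroup (Fin 2))} (hS : S.Finite)
    (F : D → FreeGroup (Fin 2)) (hinj : Function.Injective F) (hmem : ∀ d, F d ∈ S) :
    Fintype.card D ≤ S.ncard := by
  have h1 : Set.range F ⊆ S := Set.range_subset_iff.mpr hmem
  have h2 : (Set.range F).ncard = Fintype.card D := by
    rw [← Nat.card_coe_set_eq, Nat.card_range_of_injective hinj, Nat.card_eq_fintype_card]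
  exact h2 ▸ Set.ncard_le_ncard h1 hS

def F0 (d : Fin 2 × Bool × Bool) : FreeGroup (Fin 2) :=
  FreeGroup.mk [(d.1, d.2.1), (d.1 + 1, d.2.2)]

lemma pair_chain' (t : Fin 2) (s1 s2 : Bool) :
    List.Chain' Compat [(t, s1), ((t + 1 : Fin 2), s2)] :=
  List.isChain_cons_cons.mpr ⟨by simp [Compat, (fin2_succ_ne t).symm], List.isChain_singleton _⟩

lemma F0_toWord (d : Fin 2 × Bool × Bool) :
    (F0 d).toWord = [(d.1, d.2.1), (d.1 + 1, d.2.2)] := by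
  rw [F0, FreeGroup.toWord_mk, reduce_eq_self (pair_chain' d.1 d.2.1 d.2.2)]

lemma F0_inj : Function.Injective F0 := by
  rintro ⟨t, s1, s2⟩ ⟨t', s1', s2'⟩ h
  have h2 := congrArg FreeGroup.toWord h
  rw [F0_toWord, F0_toWord] at h2
  simp only [List.cons.injEq, Prod.mk.injEq] at h2
  obtain ⟨⟨rfl, rfl⟩, ⟨-, rfl⟩, -⟩ := h2
  rfl

def Fbig (k : ℕ) (d : Fin 2 × Bool × Bool × Bool × (Fin k → Fin 3)) : FreeGroup (Fin 2) :=
  FreeGroup.mk (bigWord d.1 d.2.1 d.2.2.1 d.2.2.2.1 (List.ofFn d.2.2.2.2))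

lemma Fbig_inj (k : ℕ) : Function.Injective (Fbig k) := by
  rintro ⟨t, s1, s2, e, v⟩ ⟨t', s1', s2', e', v'⟩ h
  have h2 := congrArg FreeGroup.toWord h
  rw [Fbig, Fbig, bigWord_toWord, bigWord_toWord] at h2
  rw [bigWord, bigWord] at h2
  have hlen : (wordFrom (List.ofFn v) (cLtr t s1 s2 e)).length =
      (wordFrom (List.ofFn v') (cLtr t' s1' s2' e')).length := by
    rw [wordFrom_length, wordFrom_length, List.length_ofFn, List.length_ofFn]
  obtain ⟨hw, htail⟩ := List.append_inj h2 hlen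
  simp only [List.cons.injEq, Prod.mk.injEq] at htail
  obtain ⟨⟨rfl, rfl⟩, ⟨-, rfl⟩, -⟩ := htail
  obtain ⟨hv, hc⟩ := wordFrom_inj (by simp) hw
  obtain rfl : e = e' := cLtr_inj_e hc
  obtain rfl : v = v' := List.ofFn_inj.mp hv
  rfl

lemma Fbig_mem (k m : ℕ) (hkm : m = 2 * k + 4) (d : Fin 2 × Bool × Bool × Bool × (Fin k → Fin 3)) :
    Fbig k d ∈ {u : FreeGroup (Fin 2) | IsPrimitive u ∧ u.toWord.length = m} := by
  obtain ⟨t, s1, s2, e, v⟩ := d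
  refine ⟨bigWord_prim t s1 s2 e (List.ofFn v), ?_⟩
  show (FreeGroup.mk _).toWord.length = m
  rw [bigWord_toWord, bigWord_length, List.length_ofFn, hkm]

end PrimCountAux

open PrimCountAux FreeGroup

theorem primitive_count_even (m : ℕ) (hm : Even m) (h2 : 2 ≤ m) :
    (4 / 3 : ℝ) * (Real.sqrt 3) ^ m <
      (({u : FreeGroup (Fin 2) | IsPrimitive u ∧ u.toWord.length = m}.ncard : ℝ)) := by
  set S := {u : FreeGroup (Fin 2) | IsPrimitive u ∧ u.toWord.length = m} with hS
  obtain ⟨n, hn⟩ := hm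
  have hm2 : m = 2 * n := by omega
  have hn1 : 1 ≤ n := by omega
  have hfin : S.Finite := finite_S m
  have hcard : 4 * 3 ^ (n - 1) < S.ncard := by
    rcases Nat.exists_eq_add_of_le hn1 with ⟨j, hj⟩
    rcases j with _ | j
    · -- n = 1, m = 2
      have hm' : m = 2 := by omega
      have hle : Fintype.card (Fin 2 × Bool × Bool) ≤ S.ncard := by
        refine card_le_ncard hfin F0 F0_inj ?_
        rintro ⟨t, s1, s2⟩
        refine ⟨?_, ?_⟩
        · show IsPrimitive (F0 (t, s1, s2))
          rw [F0, mk_pair]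
          exact isPrimitive_pair t s1 s2
        · show (F0 (t, s1, s2)).toWord.length = m
          rw [F0_toWord, hm']
          rfl
      simp only [Fintype.card_prod, Fintype.card_fin, Fintype.card_bool] at hle
      have : n - 1 = 0 := by omega
      rw [this]
      omega
    · -- n = j + 2
      have hkm : m = 2 * j + 4 := by omega
      have hle : Fintype.card (Fin 2 × Bool × Bool × Bool × (Fin j → Fin 3)) ≤ S.ncard :=
        card_le_ncard hfin (Fbig j) (Fbig_inj j) (Fbig_mem j m hkm)
      have hcards : Fintype.card (Fin 2 × Bool × Bool × Bool × (Fin j → Fin 3))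
          = 16 * 3 ^ j := by
        simp [Fintype.card_prod, Fintype.card_fun]
        ring
      rw [hcards] at hle
      have hnj : n - 1 = j + 1 := by omega
      rw [hnj, pow_succ]
      have h3 : (1 : ℕ) ≤ 3 ^ j := Nat.one_le_pow _ _ (by norm_num)
      omega
  have hsqrt : (Real.sqrt 3) ^ m = (3 : ℝ) ^ n := by
    rw [hm2, pow_mul, Real.sq_sqrt (by norm_num : (0:ℝ) ≤ 3)]
  rw [hsqrt]
  have hval : (4 / 3 : ℝ) * (3 : ℝ) ^ n = ((4 * 3 ^ (n - 1) : ℕ) : ℝ) := by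
    rcases Nat.exists_eq_add_of_le hn1 with ⟨j, hj⟩
    subst hj
    have h1 : 1 + j - 1 = j := by omega
    have h2' : 1 + j = j + 1 := by omega
    rw [h1, h2', pow_succ]
    push_cast
    ring
  rw [hval]
  exact_mod_cast hcard
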